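/- With b(t) = 4/(t+α), k(t) = -1/(t+α)³, and α ≥ 1, the eigenvalues λ±(t) = (-b ± √(b² - 4k))/2 satisfy |λ±'(t)| ≤ 4/α² + 3/(4α³) ≤ 19/(4α²) for all t ≥ 0. -/

import Mathlib

open Set Real MeasureTheory Filter

noncomputable def bfun (α t : ℝ) : ℝ := 4 / (t + α)

noncomputable def kfun (α t : ℝ) : ℝ := -1 / (t + α) ^ 3

/-- Eigenvalues λ± of the matrix [[0,1],[-k,-b]]. -/
noncomputable def lamP (α t : ℝ) : ℝ :=
  (-bfun α t + Real.sqrt (bfun α t ^ 2 - 4 * kfun α t)) / 2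

noncomputable def lamM (α t : ℝ) : ℝ :=
  (-bfun α t - Real.sqrt (bfun α t ^ 2 - 4 * kfun α t)) / 2

theorem stmt_12 (α : ℝ) (hα : 1 ≤ α) :
    (∀ t ≥ (0 : ℝ),
      |deriv (lamP α) t| ≤ 4 / α ^ 2 + 3 / (4 * α ^ 3)
      ∧ |deriv (lamM α) t| ≤ 4 / α ^ 2 + 3 / (4 * α ^ 3))
    ∧ 4 / α ^ 2 + 3 / (4 * α ^ 3) ≤ 19 / (4 * α ^ 2) := by
  have hα0 : (0:ℝ) < α := lt_of_lt_of_le one_pos hα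
  constructor
  · intro t ht
    have hu : (0:ℝ) < t + α := by linarith
    have hαu : α ≤ t + α := by linarith
    have hu' : t + α ≠ 0 := ne_of_gt hu
    have hid : HasDerivAt (fun s : ℝ => s + α) 1 t := (hasDerivAt_id t).add_const α
    have hb : HasDerivAt (bfun α) (-4 / (t + α) ^ 2) t := by
      have h := (hasDerivAt_const t (4:ℝ)).div hid (ne_of_gt hu)
      convert h using 1
      · rfl
      · rfl
      · rfl
      ring
    have hk : HasDerivAt (kfun α) (3 / (t + α) ^ 4) t := by
      have h := (hasDerivAt_const t (-1:ℝ)).div (hid.pow 3) (pow_ne_zero 3 (ne_of_gt hu))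
      convert h using 1
      · rfl
      · rfl
      · rfl
      simp only [Pi.pow_apply]
      field_simp
      ring
    have hbval : bfun α t = 4 / (t + α) := rfl
    have hq : HasDerivAt (fun s => bfun α s ^ 2 - 4 * kfun α s)
        (-32 / (t + α) ^ 3 - 12 / (t + α) ^ 4) t := by
      have h := (hb.pow 2).sub (hk.const_mul 4)
      convert h using 1
      · rfl
      · rfl
      · funext s; rfl
      rw [hbval]
      norm_num
      field_simp
      ring
    have hqval : bfun α t ^ 2 - 4 * kfun α t = 16 / (t + α) ^ 2 + 4 / (t + α) ^ 3 := by
      simp only [bfun, kfun]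
      field_simp
      ring
    have hqpos : 0 < bfun α t ^ 2 - 4 * kfun α t := by rw [hqval]; positivity
    set S := Real.sqrt (bfun α t ^ 2 - 4 * kfun α t) with hS_def
    have hsq_ge : 4 / (t + α) ≤ S := by
      rw [hS_def, show (4:ℝ)/(t+α) = Real.sqrt ((4/(t+α))^2) from
        (Real.sqrt_sq (by positivity)).symm]
      apply Real.sqrt_le_sqrt
      rw [hqval]
      rw [div_pow]
      norm_num
      positivity
    have hS0 : 0 < S := lt_of_lt_of_le (by positivity) hsq_ge
    have hsqrt : HasDerivAt (fun s => Real.sqrt (bfun α s ^ 2 - 4 * kfun α s))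
        ((-32 / (t + α) ^ 3 - 12 / (t + α) ^ 4) / (2 * S)) t :=
      hq.sqrt (ne_of_gt hqpos)
    set D := (-32 / (t + α) ^ 3 - 12 / (t + α) ^ 4) / (2 * S) with hD_def
    have hrw : -32 / (t + α) ^ 3 - 12 / (t + α) ^ 4
        = -(32 / (t + α) ^ 3 + 12 / (t + α) ^ 4) := by ring
    have hDabs : |D| ≤ 4 / (t + α) ^ 2 + 3 / (2 * (t + α) ^ 3) := by
      rw [hD_def, hrw, abs_div, abs_neg, abs_of_pos (by positivity : (0:ℝ) < 2 * S),
        abs_of_pos (by positivity : (0:ℝ) < 32 / (t + α) ^ 3 + 12 / (t + α) ^ 4)]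
      have h2 : 2 * (4 / (t + α)) ≤ 2 * S := by linarith
      calc (32 / (t + α) ^ 3 + 12 / (t + α) ^ 4) / (2 * S)
          ≤ (32 / (t + α) ^ 3 + 12 / (t + α) ^ 4) / (2 * (4 / (t + α))) :=
            div_le_div_of_nonneg_left (by positivity) (by positivity) h2
        _ = 4 / (t + α) ^ 2 + 3 / (2 * (t + α) ^ 3) := by
            field_simp
            ring
    have hP : HasDerivAt (lamP α) ((4 / (t + α) ^ 2 + D) / 2) t := by
      have h := (hb.neg.add hsqrt).div_const 2
      convert h using 1
      · rfl
      · rfl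
      · funext s; rfl
      ring
    have hM : HasDerivAt (lamM α) ((4 / (t + α) ^ 2 - D) / 2) t := by
      have h := (hb.neg.sub hsqrt).div_const 2
      convert h using 1
      · rfl
      · rfl
      · funext s; rfl
      ring
    have hmono2 : 4 / (t + α) ^ 2 ≤ 4 / α ^ 2 := by
      apply div_le_div_of_nonneg_left (by norm_num) (by positivity)
      exact pow_le_pow_left₀ (le_of_lt hα0) hαu 2
    have hmono3 : 3 / (4 * (t + α) ^ 3) ≤ 3 / (4 * α ^ 3) := by
      apply div_le_div_of_nonneg_left (by norm_num) (by positivity)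
      have := pow_le_pow_left₀ (le_of_lt hα0) hαu 3
      linarith
    have habs4 : |(4:ℝ) / (t + α) ^ 2| = 4 / (t + α) ^ 2 := abs_of_pos (by positivity)
    constructor
    · rw [hP.deriv]
      have h1 : |4 / (t + α) ^ 2 + D| ≤ 4 / (t + α) ^ 2 + (4 / (t + α) ^ 2 + 3 / (2 * (t + α) ^ 3)) := by
        calc |4 / (t + α) ^ 2 + D| ≤ |(4:ℝ) / (t + α) ^ 2| + |D| := abs_add_le _ _
          _ ≤ _ := by rw [habs4]; linarith
      rw [abs_div, abs_of_pos (by norm_num : (0:ℝ) < 2)]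
      calc |4 / (t + α) ^ 2 + D| / 2 ≤ (4 / (t + α) ^ 2 + (4 / (t + α) ^ 2 + 3 / (2 * (t + α) ^ 3))) / 2 := by linarith
        _ = 4 / (t + α) ^ 2 + 3 / (4 * (t + α) ^ 3) := by
            rw [show (3:ℝ) / (4 * (t + α) ^ 3) = 3 / (2 * (t + α) ^ 3) / 2 by
              rw [div_div, show 2 * (t + α) ^ 3 * 2 = 4 * (t + α) ^ 3 from by ring]]
            ring
        _ ≤ 4 / α ^ 2 + 3 / (4 * α ^ 3) := by linarith
    · rw [hM.deriv]
      have h1 : |4 / (t + α) ^ 2 - D| ≤ 4 / (t + α) ^ 2 + (4 / (t + α) ^ 2 + 3 / (2 * (t + α) ^ 3)) := by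
        calc |4 / (t + α) ^ 2 - D| ≤ |(4:ℝ) / (t + α) ^ 2| + |D| := abs_sub _ _
          _ ≤ _ := by rw [habs4]; linarith
      rw [abs_div, abs_of_pos (by norm_num : (0:ℝ) < 2)]
      calc |4 / (t + α) ^ 2 - D| / 2 ≤ (4 / (t + α) ^ 2 + (4 / (t + α) ^ 2 + 3 / (2 * (t + α) ^ 3))) / 2 := by linarith
        _ = 4 / (t + α) ^ 2 + 3 / (4 * (t + α) ^ 3) := by
            rw [show (3:ℝ) / (4 * (t + α) ^ 3) = 3 / (2 * (t + α) ^ 3) / 2 by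
              rw [div_div, show 2 * (t + α) ^ 3 * 2 = 4 * (t + α) ^ 3 from by ring]]
            ring
        _ ≤ 4 / α ^ 2 + 3 / (4 * α ^ 3) := by linarith
  · have h1 : 3 / (4 * α ^ 3) ≤ 3 / (4 * α ^ 2) := by
      apply div_le_div_of_nonneg_left (by norm_num) (by positivity)
      nlinarith
    have h2 : 4 / α ^ 2 + 3 / (4 * α ^ 2) = 19 / (4 * α ^ 2) := by
      field_simp
      ring
    linarith
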